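/- Suppose there exists at least one (ℓ,k,t)-dominating function of G. Then γ_{ℓ,k,t}(G) = γ_{ℓ,k₀,t₀}(G) + ∑_{v ∈ V \ 𝓕} t(v), where k₀ and t₀ are as defined in the context. -/
import Mathlib


open Classical Finset

/-- The closed neighborhood `N[v]` of `v` in `G`, as a finset. -/
noncomputable def closedNbhd {V : Type*} [Fintype V] (G : SimpleGraph V) (v : V) : Finset V :=
  Finset.univ.filter (fun w => G.Adj v w ∨ w = v)

/-- `f` is an `(ℓ,k,t)`-dominating function of `G`: `f ≤ ℓ` everywhere,
`f(N[v]) ≥ k(v)` for all `v`, and `f(v) = t(v)` at every non-free vertex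
(`t v = none` means the vertex `v` is free). -/
def IsLDomFn {V : Type*} [Fintype V] (G : SimpleGraph V) (ℓ : ℕ) (k : V → ℕ)
    (t : V → Option ℕ) (f : V → ℕ) : Prop :=
  (∀ v, f v ≤ ℓ) ∧ (∀ v, k v ≤ ∑ w ∈ closedNbhd G v, f w) ∧
    (∀ v a, t v = some a → f v = a)

/-- `γ_{ℓ,k,t}(G)`: minimum weight of an `(ℓ,k,t)`-dominating function. -/
noncomputable def gammaL {V : Type*} [Fintype V] (G : SimpleGraph V) (ℓ : ℕ) (k : V → ℕ)
    (t : V → Option ℕ) : ℕ :=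
  sInf {s | ∃ f, IsLDomFn G ℓ k t f ∧ s = ∑ v, f v}

/-- `k₀(v) = k(v) ∸ ∑_{w ∈ N[v] \ 𝓕} t(w)`. -/
noncomputable def kZero {V : Type*} [Fintype V] (G : SimpleGraph V) (k : V → ℕ)
    (t : V → Option ℕ) : V → ℕ :=
  fun v => k v - ∑ w ∈ (closedNbhd G v).filter (fun w => (t w).isSome), (t w).getD 0

/-- `t₀(v) = 0` if `t(v) ≠ F`, and `t₀(v) = F` otherwise. -/
def tZero {V : Type*} (t : V → Option ℕ) : V → Option ℕ :=
  fun v => (t v).map (fun _ => 0)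

private lemma sum_tval {V : Type*} (t : V → Option ℕ) (s : Finset V) :
    ∑ w ∈ s.filter (fun w => (t w).isSome), (t w).getD 0 = ∑ w ∈ s, (t w).getD 0 := by
  rw [Finset.sum_filter]
  refine Finset.sum_congr rfl fun w _ => ?_
  cases h : t w <;> simp [h]

private lemma fwd {V : Type*} [Fintype V] (G : SimpleGraph V) (ℓ : ℕ) (k : V → ℕ)
    (t : V → Option ℕ) (f : V → ℕ) (hf : IsLDomFn G ℓ k t f) :
    IsLDomFn G ℓ (kZero G k t) (tZero t) (fun v => f v - (t v).getD 0) := by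
  obtain ⟨h1, h2, h3⟩ := hf
  have hfe : ∀ w, f w - (t w).getD 0 + (t w).getD 0 = f w := by
    intro w
    apply Nat.sub_add_cancel
    cases h : t w with
    | none => simp
    | some a => rw [h3 w a h]; simp [h]
  refine ⟨fun v => le_trans (Nat.sub_le _ _) (h1 v), fun v => ?_, fun v a hv => ?_⟩
  · rw [kZero, sum_tval, tsub_le_iff_right]
    calc k v ≤ ∑ w ∈ closedNbhd G v, f w := h2 v
    _ = ∑ w ∈ closedNbhd G v, (f w - (t w).getD 0 + (t w).getD 0) := by
        exact (Finset.sum_congr rfl fun w _ => (hfe w).symm)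
    _ = _ := Finset.sum_add_distrib
  · simp only [tZero, Option.map_eq_some_iff] at hv
    obtain ⟨b, hb, hba⟩ := hv
    simp only [h3 v b hb, hb, ← hba, Option.getD_some, Nat.sub_self]

private lemma bwd {V : Type*} [Fintype V] (G : SimpleGraph V) (ℓ : ℕ) (k : V → ℕ)
    (t : V → Option ℕ) (ht : ∀ v a, t v = some a → a ≤ ℓ) (g : V → ℕ)
    (hg : IsLDomFn G ℓ (kZero G k t) (tZero t) g) :
    IsLDomFn G ℓ k t (fun v => g v + (t v).getD 0) := by
  obtain ⟨h1, h2, h3⟩ := hg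
  have h0 : ∀ v a, t v = some a → g v = 0 := by
    intro v a hv
    exact h3 v 0 (by simp [tZero, hv])
  refine ⟨fun v => ?_, fun v => ?_, fun v a hv => ?_⟩
  · cases h : t v with
    | none => simpa [h] using h1 v
    | some a => simp only []; rw [h0 v a h]; simpa [h] using ht v a h
  · have hk : k v - ∑ w ∈ (closedNbhd G v).filter (fun w => (t w).isSome), (t w).getD 0
        ≤ ∑ w ∈ closedNbhd G v, g w := h2 v
    rw [sum_tval] at hk
    calc k v ≤ (∑ w ∈ closedNbhd G v, g w) + ∑ w ∈ closedNbhd G v, (t w).getD 0 :=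
          tsub_le_iff_right.mp hk
    _ = ∑ w ∈ closedNbhd G v, (g w + (t w).getD 0) := Finset.sum_add_distrib.symm
  · simp [h0 v a hv, hv]

/-- if an `(ℓ,k,t)`-dominating function of `G` exists, then
`γ_{ℓ,k,t}(G) = γ_{ℓ,k₀,t₀}(G) + ∑_{v ∉ 𝓕} t(v)`. -/
theorem stmt_4 {V : Type*} [Fintype V] (G : SimpleGraph V) (ℓ : ℕ) (k : V → ℕ)
    (t : V → Option ℕ) (ht : ∀ v a, t v = some a → a ≤ ℓ)
    (hex : ∃ f, IsLDomFn G ℓ k t f) :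
    gammaL G ℓ k t =
      gammaL G ℓ (kZero G k t) (tZero t) +
        ∑ v ∈ Finset.univ.filter (fun v => (t v).isSome), (t v).getD 0 := by
  set T := ∑ v ∈ Finset.univ.filter (fun v => (t v).isSome), (t v).getD 0 with hT
  have hTuniv : T = ∑ v, (t v).getD 0 := sum_tval t _
  have hsum : ∀ f, IsLDomFn G ℓ k t f →
      ∑ v, f v = (∑ v, (f v - (t v).getD 0)) + T := by
    intro f hf
    rw [hTuniv, ← Finset.sum_add_distrib]
    refine Finset.sum_congr rfl fun w _ => ?_
    symm; apply Nat.sub_add_cancel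
    cases h : t w with
    | none => simp
    | some a => rw [hf.2.2 w a h]; simp [h]
  obtain ⟨f, hf⟩ := hex
  have hne1 : {s | ∃ f, IsLDomFn G ℓ k t f ∧ s = ∑ v, f v}.Nonempty :=
    ⟨_, f, hf, rfl⟩
  have hne2 : {s | ∃ g, IsLDomFn G ℓ (kZero G k t) (tZero t) g ∧ s = ∑ v, g v}.Nonempty :=
    ⟨_, _, fwd G ℓ k t f hf, rfl⟩
  apply le_antisymm
  · -- γ ≤ γ₀ + T
    obtain ⟨g, hg, hgs⟩ := Nat.sInf_mem hne2
    have hmem : (∑ v, (g v + (t v).getD 0)) ∈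
        {s | ∃ f, IsLDomFn G ℓ k t f ∧ s = ∑ v, f v} :=
      ⟨_, bwd G ℓ k t ht g hg, rfl⟩
    have := Nat.sInf_le hmem
    calc gammaL G ℓ k t ≤ ∑ v, (g v + (t v).getD 0) := this
    _ = (∑ v, g v) + T := by rw [Finset.sum_add_distrib, hTuniv]
    _ = gammaL G ℓ (kZero G k t) (tZero t) + T := by rw [← hgs]; rfl
  · -- γ₀ + T ≤ γ
    obtain ⟨f', hf', hfs⟩ := Nat.sInf_mem hne1
    have hmem : (∑ v, (f' v - (t v).getD 0)) ∈
        {s | ∃ g, IsLDomFn G ℓ (kZero G k t) (tZero t) g ∧ s = ∑ v, g v} :=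
      ⟨_, fwd G ℓ k t f' hf', rfl⟩
    calc gammaL G ℓ (kZero G k t) (tZero t) + T
        ≤ (∑ v, (f' v - (t v).getD 0)) + T := by
          exact Nat.add_le_add_right (Nat.sInf_le hmem) T
    _ = ∑ v, f' v := (hsum f' hf').symm
    _ = gammaL G ℓ k t := by rw [← hfs]; rfl
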